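/- For all integers k ≥ 1 and n ≥ 2, the cut-then-k-riffle-shuffle measure is a probability measure: Σ_{π ∈ S_n} binom(n+k−cd(π)−1, n−1)/(n·k^{n−1}) = 1. -/

import Mathlib

/-- Number of descents of a permutation of `{1,...,n}` (here `Fin n`, 0-indexed):
the number of positions `i` with `1 ≤ i ≤ n-1` and `π(i) > π(i+1)`. -/
def numDescents (n : ℕ) (π : Equiv.Perm (Fin n)) : ℕ :=
  ((Finset.range (n - 1)).filter (fun i =>
    ∃ h : i + 1 < n, π ⟨i + 1, h⟩ < π ⟨i, Nat.lt_of_succ_lt h⟩)).card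

/-- `π` has a cyclic descent at `n` if `π(n) > π(1)`. -/
def hasCyclicDescentAtLast (n : ℕ) (π : Equiv.Perm (Fin n)) : Prop :=
  ∃ h : 0 < n, π ⟨0, h⟩ < π ⟨n - 1, Nat.sub_lt h Nat.one_pos⟩

instance (n : ℕ) (π : Equiv.Perm (Fin n)) : Decidable (hasCyclicDescentAtLast n π) :=
  exists_prop_decidable _

/-- Number of cyclic descents: `d(π)+1` if `π` has a cyclic descent at `n`, else `d(π)`. -/
def numCyclicDescents (n : ℕ) (π : Equiv.Perm (Fin n)) : ℕ :=
  numDescents n π + if hasCyclicDescentAtLast n π then 1 else 0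

/-- The k-riffle shuffle measure `R_{k,n}(π) = binom(n+k-d(π)-1, n) / k^n`. -/
noncomputable def riffle (k n : ℕ) (π : Equiv.Perm (Fin n)) : ℝ :=
  (Nat.choose (n + k - numDescents n π - 1) n : ℝ) / (k : ℝ) ^ n

/-- The cut-then-k-riffle-shuffle measure
`C_{k,n}(π) = binom(n+k-cd(π)-1, n-1) / (n·k^(n-1))`. -/
noncomputable def cutRiffle (k n : ℕ) (π : Equiv.Perm (Fin n)) : ℝ :=
  (Nat.choose (n + k - numCyclicDescents n π - 1) (n - 1) : ℝ) / ((n : ℝ) * (k : ℝ) ^ (n - 1))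

open Finset
open Fin.NatCast

-- adjacent descent predicate
def DescAt {m : ℕ} (σ : Equiv.Perm (Fin (m+1))) (i : Fin m) : Prop :=
  σ i.succ < σ i.castSucc

instance {m : ℕ} (σ : Equiv.Perm (Fin (m+1))) : DecidablePred (DescAt σ) :=
  fun _ => inferInstanceAs (Decidable (_ < _))

lemma numDescents_eq_card {m : ℕ} (σ : Equiv.Perm (Fin (m+1))) :
    numDescents (m+1) σ = (univ.filter (DescAt σ)).card := by
  unfold numDescents
  simp only [Nat.add_sub_cancel]
  refine card_bij (fun a ha => ⟨a, mem_range.mp (mem_of_mem_filter a ha)⟩) ?_ ?_ ?_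
  · intro a ha
    simp only [mem_filter, mem_univ, true_and]
    obtain ⟨-, ⟨h, hlt⟩⟩ := mem_filter.mp ha
    exact hlt
  · intro a ha b hb h
    simpa using congrArg Fin.val h
  · intro b hb
    refine ⟨(b : ℕ), ?_, by simp⟩
    simp only [mem_filter, mem_range]
    refine ⟨b.isLt, Nat.succ_lt_succ b.isLt, ?_⟩
    exact (mem_filter.mp hb).2

lemma card_strictMonoSet (M N : ℕ) :
    (univ.filter (fun h : Fin M → Fin N => ∀ i j : Fin M, i < j → h i < h j)).card
      = N.choose M := by
  classical
  have : ((univ : Finset (Fin N)).powersetCard M).card = N.choose M := by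
    simp [card_powersetCard]
  rw [← this]
  refine card_bij' (fun f _ => image f univ)
    (fun s hs => (s.orderEmbOfFin (by simpa using (mem_powersetCard.mp hs).2) : Fin M → Fin N))
    ?_ ?_ ?_ ?_
  · intro f hf
    have hsm : StrictMono f := fun a b hab => (mem_filter.mp hf).2 a b hab
    rw [mem_powersetCard]
    exact ⟨subset_univ _, by rw [card_image_of_injective _ hsm.injective]; simp⟩
  · intro s hs
    simp only [mem_filter, mem_univ, true_and]
    intro i j hij
    exact (s.orderEmbOfFin _).strictMono hij
  · intro f hf
    have hsm : StrictMono f := fun a b hab => (mem_filter.mp hf).2 a b hab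
    exact (Finset.orderEmbOfFin_unique _ (fun x => mem_image_of_mem f (mem_univ x)) hsm).symm
  · intro s hs
    have h := (mem_powersetCard.mp hs).2
    ext x
    constructor
    · intro hx
      obtain ⟨i, -, rfl⟩ := mem_image.mp hx
      exact Finset.orderEmbOfFin_mem s _ i
    · intro hx
      have : x ∈ Set.range (s.orderEmbOfFin (by simpa using h)) := by
        rw [Finset.range_orderEmbOfFin]; exact hx
      obtain ⟨i, rfl⟩ := this
      exact mem_image_of_mem _ (mem_univ i)

section Cfun
variable {m : ℕ} (σ : Equiv.Perm (Fin (m+1)))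

/-- `j` is a descent position (as a natural number). -/
def Pd (j : ℕ) : Prop := ∃ h : j < m, DescAt σ ⟨j, h⟩

instance : DecidablePred (Pd σ) := fun _ => exists_prop_decidable _

/-- number of non-descent positions below `t` -/
def cfun (t : ℕ) : ℕ := ((range t).filter (fun j => ¬ Pd σ j)).card

lemma cstep (t : ℕ) : cfun σ (t+1) = cfun σ t + if Pd σ t then 0 else 1 := by
  unfold cfun
  rw [Finset.range_add_one, Finset.filter_insert]
  by_cases hp : Pd σ t
  · simp [hp]
  · rw [if_pos (by exact hp), if_neg hp, card_insert_of_notMem (by simp)]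

lemma cfun_le (t : ℕ) : cfun σ t ≤ t :=
  le_trans (card_filter_le _ _) (le_of_eq (card_range t))

lemma cfun_mono {s t : ℕ} (h : s ≤ t) : cfun σ s ≤ cfun σ t :=
  card_le_card (filter_subset_filter _ (by simpa using Finset.range_subset_range.mpr h))

lemma cfun_grow {s t : ℕ} (h : s ≤ t) : cfun σ t ≤ cfun σ s + (t - s) := by
  induction t with
  | zero =>
    have : s = 0 := by omega
    subst this; simp [cfun]
  | succ t ih =>
    rcases Nat.lt_or_ge s (t+1) with hlt | hge
    · have := ih (by omega)
      rw [cstep]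
      split <;> omega
    · have : s = t + 1 := by omega
      subst this; simp

lemma card_Pd : ((range m).filter (Pd σ)).card = (univ.filter (DescAt σ)).card := by
  refine card_bij (fun a ha => ⟨a, mem_range.mp (mem_of_mem_filter a ha)⟩) ?_ ?_ ?_
  · intro a ha
    simp only [mem_filter, mem_univ, true_and]
    obtain ⟨-, ⟨h, hlt⟩⟩ := mem_filter.mp ha
    exact hlt
  · intro a ha b hb h
    simpa using congrArg Fin.val h
  · intro b hb
    refine ⟨(b : ℕ), ?_, by simp⟩
    simp only [mem_filter, mem_range]
    exact ⟨b.isLt, b.isLt, (mem_filter.mp hb).2⟩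

lemma cfun_top : cfun σ m + (univ.filter (DescAt σ)).card = m := by
  unfold cfun
  rw [← card_Pd σ]
  rw [add_comm, card_filter_add_card_filter_not (p := Pd σ), card_range]

end Cfun

lemma Pd_coe {m : ℕ} (σ : Equiv.Perm (Fin (m+1))) (i : Fin m) :
    Pd σ (i : ℕ) ↔ DescAt σ i := by
  constructor
  · rintro ⟨h, hd⟩; rwa [Fin.eta] at hd
  · intro hd; exact ⟨i.isLt, by rwa [Fin.eta]⟩

lemma smono_grow {M N : ℕ} {h : Fin M → Fin N}
    (hh : ∀ i j : Fin M, i < j → h i < h j) (i j : Fin M) (hij : i ≤ j) :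
    (h i : ℕ) + ((j : ℕ) - (i : ℕ)) ≤ (h j : ℕ) := by
  have key : ∀ t : ℕ, ∀ j : Fin M, (j : ℕ) = (i : ℕ) + t → (h i : ℕ) + t ≤ (h j : ℕ) := by
    intro t
    induction t with
    | zero =>
      intro j hj
      have : j = i := Fin.ext (by omega)
      subst this; simp
    | succ t ih =>
      intro j hj
      have hjlt : (i : ℕ) + t < M := by omega
      have h1 := ih ⟨(i : ℕ) + t, hjlt⟩ rfl
      have h2 : h ⟨(i : ℕ) + t, hjlt⟩ < h j := hh _ _ (by simp [Fin.lt_def]; omega)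
      have h2' : (h ⟨(i : ℕ) + t, hjlt⟩ : ℕ) < (h j : ℕ) := h2
      omega
  have hij' : (i : ℕ) ≤ (j : ℕ) := hij
  have := key ((j : ℕ) - (i : ℕ)) j (by omega)
  omega

lemma card_Gset {m k : ℕ} (hk : 1 ≤ k) (σ : Equiv.Perm (Fin (m+1))) :
    (univ.filter (fun g : Fin (m+1) → Fin k =>
        (∀ i : Fin m, g i.castSucc ≤ g i.succ) ∧
        (∀ i : Fin m, DescAt σ i → g i.castSucc < g i.succ))).card
      = (k + (m - (univ.filter (DescAt σ)).card)).choose (m+1) := by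
  set d := (univ.filter (DescAt σ)).card with hd
  have hdm : cfun σ m + d = m := cfun_top σ
  set N := k + (m - d) with hN
  have hcm : cfun σ m = m - d := by omega
  -- cfun at any i : Fin (m+1) is ≤ m - d
  have hcle : ∀ i : Fin (m+1), cfun σ (i : ℕ) ≤ m - d := by
    intro i
    have := cfun_mono σ (Nat.lt_succ_iff.mp i.isLt)
    omega
  rw [← card_strictMonoSet (m+1) N]
  have hstep : ∀ i : Fin m, cfun σ ((i : ℕ) + 1)
      = cfun σ (i : ℕ) + if DescAt σ i then 0 else 1 := by
    intro i
    rw [cstep]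
    by_cases hD : DescAt σ i
    · rw [if_pos ((Pd_coe σ i).mpr hD), if_pos hD]
    · rw [if_neg (fun hc => hD ((Pd_coe σ i).mp hc)), if_neg hD]
  refine card_bij'
    (fun g _ => fun i : Fin (m+1) => (⟨(g i : ℕ) + cfun σ (i : ℕ), by
      have h1 : (g i : ℕ) < k := (g i).isLt
      have h2 := hcle i
      omega⟩ : Fin N))
    (fun h hh => fun i : Fin (m+1) => (⟨(h i : ℕ) - cfun σ (i : ℕ), by
      have hsm : ∀ a b : Fin (m+1), a < b → h a < h b :=
        (mem_filter.mp hh).2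
      have h1 : (h (Fin.last m) : ℕ) < N := (h (Fin.last m)).isLt
      have h2 := smono_grow hsm i (Fin.last m) (Fin.le_last i)
      have h3 := cfun_grow σ (Nat.lt_succ_iff.mp i.isLt)
      have h4 : (i : ℕ) ≤ m := Nat.lt_succ_iff.mp i.isLt
      simp only [Fin.val_last] at h2
      omega⟩ : Fin k))
    ?_ ?_ ?_ ?_
  · -- forward map lands in strict mono set
    intro g hg
    obtain ⟨-, hmono, hdesc⟩ := mem_filter.mp hg
    simp only [mem_filter, mem_univ, true_and]
    intro a b hab
    have : StrictMono (fun i : Fin (m+1) =>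
        (⟨(g i : ℕ) + cfun σ (i : ℕ), by
          have h1 : (g i : ℕ) < k := (g i).isLt
          have h2 := hcle i
          omega⟩ : Fin N)) := by
      rw [Fin.strictMono_iff_lt_succ]
      intro i
      simp only [Fin.lt_def, Fin.val_succ, Fin.coe_castSucc]
      have hs := hstep i
      by_cases hD : DescAt σ i
      · have := hdesc i hD
        rw [if_pos hD] at hs
        have : (g i.castSucc : ℕ) < (g i.succ : ℕ) := this
        omega
      · have := hmono i
        rw [if_neg hD] at hs
        have : (g i.castSucc : ℕ) ≤ (g i.succ : ℕ) := this
        omega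
    exact this hab
  · -- inverse map lands in Gset
    intro h hh
    have hsm : ∀ a b : Fin (m+1), a < b → h a < h b := (mem_filter.mp hh).2
    have hle : ∀ i : Fin (m+1), cfun σ (i : ℕ) ≤ (h i : ℕ) := by
      intro i
      have := smono_grow hsm 0 i (Fin.zero_le i)
      have := cfun_le σ (i : ℕ)
      simp only [Fin.val_zero] at *
      omega
    simp only [mem_filter, mem_univ, true_and]
    constructor
    · intro i
      have hs := hstep i
      have hlt : (h i.castSucc : ℕ) < (h i.succ : ℕ) :=
        hsm _ _ (Fin.castSucc_lt_succ (i := i))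
      have hc := hle i.castSucc
      simp only [Fin.coe_castSucc] at hc
      simp only [Fin.le_def, Fin.val_succ, Fin.coe_castSucc]
      split at hs <;> omega
    · intro i hD
      have hs := hstep i
      rw [if_pos hD] at hs
      have hlt : (h i.castSucc : ℕ) < (h i.succ : ℕ) :=
        hsm _ _ (Fin.castSucc_lt_succ (i := i))
      have hc := hle i.castSucc
      simp only [Fin.coe_castSucc] at hc
      simp only [Fin.lt_def, Fin.val_succ, Fin.coe_castSucc]
      omega
  · -- left inverse
    intro g hg
    funext i
    apply Fin.ext
    simp
  · -- right inverse
    intro h hh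
    have hsm : ∀ a b : Fin (m+1), a < b → h a < h b := (mem_filter.mp hh).2
    have hle : ∀ i : Fin (m+1), cfun σ (i : ℕ) ≤ (h i : ℕ) := by
      intro i
      have := smono_grow hsm 0 i (Fin.zero_le i)
      have := cfun_le σ (i : ℕ)
      simp only [Fin.val_zero] at *
      omega
    funext i
    apply Fin.ext
    have := hle i
    simp only []
    omega

lemma aux_chain {m k : ℕ} {σ : Equiv.Perm (Fin (m+1))} {g : Fin (m+1) → Fin k}
    (hmono : Monotone g)
    (hadj : ∀ i : Fin m, g i.castSucc = g i.succ → σ i.castSucc < σ i.succ) :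
    ∀ i j : Fin (m+1), i < j → g i = g j → σ i < σ j := by
  have key : ∀ t : ℕ, ∀ i j : Fin (m+1), (j : ℕ) = (i : ℕ) + t + 1 → g i = g j → σ i < σ j := by
    intro t
    induction t with
    | zero =>
      intro i j hj hg
      have him : (i : ℕ) < m := by omega
      have hi : i = (⟨(i : ℕ), him⟩ : Fin m).castSucc := Fin.ext rfl
      have hjj : j = (⟨(i : ℕ), him⟩ : Fin m).succ := Fin.ext (by simp [hj])
      rw [hi, hjj] at hg ⊢
      exact hadj _ hg
    | succ t ih =>
      intro i j hj hg
      have him : (i : ℕ) < m := by omega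
      set i' : Fin m := ⟨(i : ℕ), him⟩ with hi'
      have hile : i ≤ i'.succ := by
        rw [Fin.le_def]; simp [hi']
      have hmid : i'.succ ≤ j := by
        rw [Fin.le_def]; simp [hi']; omega
      have e1 : g i = g i'.succ :=
        le_antisymm (hmono hile) (hg ▸ hmono hmid)
      have e2 : g i'.succ = g j := by
        rw [← e1, hg]
      have hci : i = i'.castSucc := Fin.ext rfl
      have s1 : σ i < σ i'.succ := by
        rw [hci]; exact hadj i' (by rw [← hci, e1])
      have s2 : σ i'.succ < σ j := ih i'.succ j (by simp [hi']; omega) e2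
      exact lt_trans s1 s2
  intro i j hij hg
  have hij' : (i : ℕ) < (j : ℕ) := hij
  exact key ((j : ℕ) - (i : ℕ) - 1) i j (by omega) hg

lemma sort_eq_iff {m k : ℕ} (σ : Equiv.Perm (Fin (m+1))) (f : Fin (m+1) → Fin k) :
    Tuple.sort f = σ ↔
      ((∀ i : Fin m, (f ∘ σ) i.castSucc ≤ (f ∘ σ) i.succ) ∧
       (∀ i : Fin m, DescAt σ i → (f ∘ σ) i.castSucc < (f ∘ σ) i.succ)) := by
  rw [eq_comm, Tuple.eq_sort_iff]
  constructor
  · rintro ⟨hm, hcond⟩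
    refine ⟨fun i => hm (le_of_lt (Fin.castSucc_lt_succ (i := i))), fun i hD => ?_⟩
    refine lt_of_le_of_ne (hm (le_of_lt (Fin.castSucc_lt_succ (i := i)))) (fun e => ?_)
    exact lt_asymm hD (hcond _ _ (Fin.castSucc_lt_succ (i := i)) e)
  · rintro ⟨hm', hd'⟩
    have hmono : Monotone (f ∘ σ) := Fin.monotone_iff_le_succ.mpr hm'
    refine ⟨hmono, ?_⟩
    intro i j hij he
    refine aux_chain hmono (fun i hgi => ?_) i j hij he
    by_contra hns
    have hne : σ i.castSucc ≠ σ i.succ :=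
      fun hc => (Fin.castSucc_lt_succ (i := i)).ne (σ.injective hc)
    have hD : DescAt σ i := lt_of_le_of_ne (not_lt.mp hns) (Ne.symm hne)
    exact absurd hgi (ne_of_lt (hd' i hD))

theorem worpitzky (m k : ℕ) (hk : 1 ≤ k) :
    ∑ σ : Equiv.Perm (Fin (m+1)), (m + k - numDescents (m+1) σ).choose (m+1) = k ^ (m+1) := by
  classical
  have base : (univ : Finset (Fin (m+1) → Fin k)).card = k ^ (m+1) := by
    simp [card_univ]
  rw [← base,
    card_eq_sum_card_fiberwise (f := fun f => Tuple.sort f) (t := univ) (fun _ _ => mem_univ _)]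
  refine Finset.sum_congr rfl (fun σ _ => ?_)
  have hfiber : (univ.filter fun f : Fin (m+1) → Fin k => Tuple.sort f = σ).card
      = (univ.filter (fun g : Fin (m+1) → Fin k =>
        (∀ i : Fin m, g i.castSucc ≤ g i.succ) ∧
        (∀ i : Fin m, DescAt σ i → g i.castSucc < g i.succ))).card := by
    refine card_nbij' (fun f => f ∘ σ) (fun g => g ∘ ⇑σ⁻¹) ?_ ?_ ?_ ?_
    · intro f hf
      have := (mem_filter.mp hf).2
      rw [sort_eq_iff] at this
      simp only [mem_coe, mem_filter, mem_univ, true_and]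
      exact this
    · intro g hg
      have := (mem_filter.mp hg).2
      simp only [mem_coe, mem_filter, mem_univ, true_and]
      rw [sort_eq_iff]
      have hcomp : (g ∘ ⇑σ⁻¹) ∘ ⇑σ = g := by
        funext x; simp
      rw [hcomp]
      exact this
    · intro f _; funext x; simp
    · intro g _; funext x; simp
  rw [hfiber, card_Gset hk σ, ← numDescents_eq_card σ]
  have hdle : numDescents (m+1) σ ≤ m := by
    rw [numDescents_eq_card σ]
    calc (univ.filter (DescAt σ)).card ≤ (univ : Finset (Fin m)).card := card_filter_le _ _
    _ = m := by simp
  rw [add_comm m k, Nat.add_sub_assoc hdle]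

/-- extend a permutation of `Fin m` to `Fin (m+1)` fixing the last element -/
def extPerm {m : ℕ} (σ : Equiv.Perm (Fin m)) : Equiv.Perm (Fin (m+1)) where
  toFun := Fin.snoc (fun i => (σ i).castSucc) (Fin.last m)
  invFun := Fin.snoc (fun i => (σ⁻¹ i).castSucc) (Fin.last m)
  left_inv := by
    intro i
    induction i using Fin.lastCases with
    | last => simp
    | cast i => simp
  right_inv := by
    intro i
    induction i using Fin.lastCases with
    | last => simp
    | cast i => simp

@[simp] lemma extPerm_castSucc {m : ℕ} (σ : Equiv.Perm (Fin m)) (i : Fin m) :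
    extPerm σ i.castSucc = (σ i).castSucc := by
  simp [extPerm, Equiv.coe_fn_mk]

@[simp] lemma extPerm_last {m : ℕ} (σ : Equiv.Perm (Fin m)) :
    extPerm σ (Fin.last m) = Fin.last m := by
  simp [extPerm, Equiv.coe_fn_mk]

lemma descAt_extPerm {m : ℕ} (σ : Equiv.Perm (Fin (m+1))) (i : Fin (m+1)) :
    DescAt (extPerm σ) i ↔ ∃ i' : Fin m, i = i'.castSucc ∧ DescAt σ i' := by
  induction i using Fin.lastCases with
  | last =>
    constructor
    · intro hD
      exfalso
      unfold DescAt at hD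
      have h1 : (Fin.last m).succ = Fin.last (m+1) := by apply Fin.ext; simp
      rw [h1, extPerm_last] at hD
      exact absurd hD (not_lt.mpr (Fin.le_last _))
    · rintro ⟨i', hi', -⟩
      exfalso
      have := congrArg Fin.val hi'
      simp at this
      omega
  | cast i =>
    constructor
    · intro hD
      refine ⟨i, rfl, ?_⟩
      unfold DescAt at hD ⊢
      rw [Fin.succ_castSucc] at hD
      rw [extPerm_castSucc, extPerm_castSucc] at hD
      exact (Fin.castSucc_lt_castSucc_iff).mp hD
    · rintro ⟨i', hi', hd⟩
      have : i = i' := by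
        apply Fin.ext
        have := congrArg Fin.val hi'
        simpa using this
      subst this
      unfold DescAt at hd ⊢
      rw [Fin.succ_castSucc, extPerm_castSucc, extPerm_castSucc]
      exact Fin.castSucc_lt_castSucc_iff.mpr hd

lemma numDescents_extPerm {m : ℕ} (σ : Equiv.Perm (Fin (m+1))) :
    numDescents (m+2) (extPerm σ) = numDescents (m+1) σ := by
  rw [numDescents_eq_card (extPerm σ), numDescents_eq_card σ]
  symm
  refine card_bij (fun i _ => i.castSucc) ?_ ?_ ?_
  · intro i hi
    simp only [mem_filter, mem_univ, true_and] at hi ⊢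
    exact (descAt_extPerm σ i.castSucc).mpr ⟨i, rfl, hi⟩
  · intro a _ b _ h
    exact Fin.castSucc_injective _ h
  · intro j hj
    simp only [mem_filter, mem_univ, true_and] at hj
    obtain ⟨i', rfl, hd⟩ := (descAt_extPerm σ j).mp hj
    exact ⟨i', by simp [hd], rfl⟩

lemma numCyclicDescents_extPerm {m : ℕ} (σ : Equiv.Perm (Fin (m+1))) :
    numCyclicDescents (m+2) (extPerm σ) = numDescents (m+1) σ + 1 := by
  unfold numCyclicDescents
  rw [numDescents_extPerm]
  congr 1
  rw [if_pos]
  refine ⟨Nat.succ_pos _, ?_⟩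
  have h0 : (⟨0, Nat.succ_pos _⟩ : Fin (m+2)) = (0 : Fin (m+1)).castSucc := by
    apply Fin.ext; simp
  have hl : (⟨m+2-1, by omega⟩ : Fin (m+2)) = Fin.last (m+1) := by
    apply Fin.ext; simp
  rw [h0, hl, extPerm_castSucc, extPerm_last]
  exact Fin.castSucc_lt_last _

lemma castSucc_add_one' {m : ℕ} (i : Fin m) :
    (i.castSucc + 1 : Fin (m+1)) = i.succ := by
  apply Fin.ext
  rw [Fin.val_add_one_of_lt (Fin.castSucc_lt_last i)]
  simp

lemma cd_eq {m : ℕ} (π : Equiv.Perm (Fin (m+1))) :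
    numCyclicDescents (m+1) π = (univ.filter fun i : Fin (m+1) => π (i+1) < π i).card := by
  rw [card_filter, Fin.sum_univ_castSucc]
  unfold numCyclicDescents
  congr 1
  · rw [numDescents_eq_card, card_filter]
    refine Finset.sum_congr rfl (fun i _ => ?_)
    congr 1
    unfold DescAt
    rw [castSucc_add_one']
  · rw [Fin.last_add_one]
    have h0 : (0 : Fin (m+1)) = ⟨0, Nat.succ_pos m⟩ := rfl
    have hl : Fin.last m = ⟨m+1-1, Nat.sub_lt (Nat.succ_pos m) Nat.one_pos⟩ := rfl
    by_cases hcd : π ⟨0, Nat.succ_pos m⟩ < π ⟨m+1-1, Nat.sub_lt (Nat.succ_pos m) Nat.one_pos⟩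
    · rw [if_pos (show hasCyclicDescentAtLast (m+1) π from ⟨Nat.succ_pos m, hcd⟩), if_pos (by rw [h0, hl]; exact hcd)]
    · rw [if_neg (show ¬ hasCyclicDescentAtLast (m+1) π from fun ⟨h, hc⟩ => hcd hc), if_neg (by rw [h0, hl]; exact hcd)]

lemma rot_pow {m : ℕ} (a : ℕ) (i : Fin (m+1)) :
    ((finRotate (m+1)) ^ a) i = i + (a : Fin (m+1)) := by
  induction a with
  | zero => simp
  | succ a ih =>
    rw [pow_succ', Equiv.Perm.mul_apply, finRotate_succ_apply, ih]
    push_cast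
    rw [add_assoc]

lemma cd_mul_rot {m : ℕ} (π : Equiv.Perm (Fin (m+1))) :
    numCyclicDescents (m+1) (π * finRotate (m+1)) = numCyclicDescents (m+1) π := by
  rw [cd_eq, cd_eq]
  refine card_nbij' (fun i => i + 1) (fun i => i - 1) ?_ ?_ ?_ ?_
  · intro i hi
    simp only [mem_coe, mem_filter, mem_univ, true_and, Equiv.Perm.mul_apply,
      finRotate_succ_apply] at hi ⊢
    exact hi
  · intro i hi
    simp only [mem_coe, mem_filter, mem_univ, true_and, Equiv.Perm.mul_apply,
      finRotate_succ_apply] at hi ⊢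
    rw [sub_add_cancel]
    exact hi
  · intro i _; simp
  · intro i _; simp

lemma cd_mul_rot_pow {m : ℕ} (π : Equiv.Perm (Fin (m+1))) (a : ℕ) :
    numCyclicDescents (m+1) (π * (finRotate (m+1)) ^ a) = numCyclicDescents (m+1) π := by
  induction a with
  | zero => simp
  | succ a ih =>
    rw [pow_succ, ← mul_assoc, cd_mul_rot, ih]

lemma rot_pow_inv {m : ℕ} (a : ℕ) (y : Fin (m+1)) :
    ((finRotate (m+1)) ^ a)⁻¹ y = y - (a : Fin (m+1)) := by
  rw [Equiv.Perm.inv_eq_iff_eq, rot_pow, sub_add_cancel]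

lemma extPerm_inv_last {m : ℕ} (σ : Equiv.Perm (Fin m)) :
    (extPerm σ)⁻¹ (Fin.last m) = Fin.last m := by
  rw [Equiv.Perm.inv_eq_iff_eq, extPerm_last]

lemma perm_apply_inv_self' {α : Type*} (f : Equiv.Perm α) (x : α) : f (f⁻¹ x) = x :=
  f.apply_symm_apply x

lemma perm_inv_apply_self' {α : Type*} (f : Equiv.Perm α) (x : α) : f⁻¹ (f x) = x :=
  f.symm_apply_apply x

lemma E_bijective (m : ℕ) :
    Function.Bijective (fun p : Equiv.Perm (Fin (m+1)) × Fin (m+2) =>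
      extPerm p.1 * (finRotate (m+2)) ^ ((p.2 : ℕ))) := by
  constructor
  · rintro ⟨σ, a⟩ ⟨τ, b⟩ h
    simp only [Prod.mk.injEq] at h ⊢
    have hinv := congrArg (fun π : Equiv.Perm (Fin (m+2)) => π⁻¹ (Fin.last (m+1))) h
    simp only [mul_inv_rev, Equiv.Perm.mul_apply, extPerm_inv_last, rot_pow_inv,
      Fin.cast_val_eq_self] at hinv
    have hab : a = b := by
      have := sub_right_injective (G := Fin (m+2)) hinv
      exact this
    subst hab
    refine ⟨?_, rfl⟩
    have hext : extPerm σ = extPerm τ := mul_right_cancel h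
    ext i
    have := congrArg (fun π : Equiv.Perm (Fin (m+2)) => π i.castSucc) hext
    simp only [extPerm_castSucc] at this
    exact congrArg Fin.val (Fin.castSucc_injective _ this)
  · intro ρ
    set a : Fin (m+2) := Fin.last (m+1) - ρ⁻¹ (Fin.last (m+1)) with ha
    set τ : Equiv.Perm (Fin (m+2)) := ρ * ((finRotate (m+2)) ^ ((a : ℕ)))⁻¹ with hτ
    have hτlast : τ (Fin.last (m+1)) = Fin.last (m+1) := by
      rw [hτ, Equiv.Perm.mul_apply, rot_pow_inv, Fin.cast_val_eq_self, ha, sub_sub_cancel,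
        perm_apply_inv_self']
    have hne : ∀ i : Fin (m+1), τ i.castSucc ≠ Fin.last (m+1) := by
      intro i hc
      rw [← hτlast] at hc
      exact (Fin.castSucc_lt_last i).ne (τ.injective hc)
    have hne' : ∀ i : Fin (m+1), τ⁻¹ i.castSucc ≠ Fin.last (m+1) := by
      intro i hc
      have : i.castSucc = τ (Fin.last (m+1)) := by
        rw [← hc, perm_apply_inv_self']
      rw [hτlast] at this
      exact (Fin.castSucc_lt_last i).ne this
    refine ⟨(⟨fun i => (τ i.castSucc).castPred (hne i),
             fun i => (τ⁻¹ i.castSucc).castPred (hne' i), ?_, ?_⟩, a), ?_⟩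
    · intro i
      apply Fin.castSucc_injective
      rw [Fin.castSucc_castPred, Fin.castSucc_castPred, perm_inv_apply_self']
    · intro i
      apply Fin.castSucc_injective
      rw [Fin.castSucc_castPred, Fin.castSucc_castPred, perm_apply_inv_self']
    · have hext : extPerm (⟨fun i => (τ i.castSucc).castPred (hne i),
             fun i => (τ⁻¹ i.castSucc).castPred (hne' i), by
              intro i
              apply Fin.castSucc_injective
              rw [Fin.castSucc_castPred, Fin.castSucc_castPred, perm_inv_apply_self'], by
              intro i
              apply Fin.castSucc_injective
              rw [Fin.castSucc_castPred, Fin.castSucc_castPred, perm_apply_inv_self']⟩ :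
              Equiv.Perm (Fin (m+1))) = τ := by
        apply Equiv.ext
        intro j
        induction j using Fin.lastCases with
        | last => rw [extPerm_last, hτlast]
        | cast i =>
          rw [extPerm_castSucc]
          show ((τ i.castSucc).castPred (hne i)).castSucc = _
          rw [Fin.castSucc_castPred]
      show extPerm _ * (finRotate (m+2)) ^ ((a : ℕ)) = ρ
      rw [hext, hτ, mul_assoc, inv_mul_cancel, mul_one]

lemma key_sum (m k : ℕ) (hk : 1 ≤ k) :
    ∑ π : Equiv.Perm (Fin (m+2)),
        ((m + 2) + k - numCyclicDescents (m+2) π - 1).choose (m+1)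
      = (m + 2) * k ^ (m+1) := by
  classical
  rw [← Fintype.sum_bijective _ (E_bijective m)
    (fun p : Equiv.Perm (Fin (m+1)) × Fin (m+2) =>
      ((m + 2) + k - numCyclicDescents (m+2)
        (extPerm p.1 * (finRotate (m+2)) ^ ((p.2 : ℕ))) - 1).choose (m+1))
    _ (fun p => rfl)]
  have hval : ∀ (σ : Equiv.Perm (Fin (m+1))) (a : Fin (m+2)),
      ((m + 2) + k - numCyclicDescents (m+2)
        (extPerm σ * (finRotate (m+2)) ^ ((a : ℕ))) - 1).choose (m+1)
      = (m + k - numDescents (m+1) σ).choose (m+1) := by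
    intro σ a
    rw [cd_mul_rot_pow, numCyclicDescents_extPerm]
    congr 1
    have hdle : numDescents (m+1) σ ≤ m := by
      rw [numDescents_eq_card σ]
      calc (univ.filter (DescAt σ)).card ≤ (univ : Finset (Fin m)).card :=
        card_filter_le _ _
      _ = m := by simp
    omega
  rw [Fintype.sum_prod_type]
  calc ∑ σ : Equiv.Perm (Fin (m+1)), ∑ a : Fin (m+2),
        ((m + 2) + k - numCyclicDescents (m+2)
          (extPerm σ * (finRotate (m+2)) ^ ((a : ℕ))) - 1).choose (m+1)
      = ∑ σ : Equiv.Perm (Fin (m+1)), ∑ _a : Fin (m+2),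
          (m + k - numDescents (m+1) σ).choose (m+1) := by
        refine Finset.sum_congr rfl (fun σ _ => Finset.sum_congr rfl (fun a _ => hval σ a))
    _ = (m + 2) * ∑ σ : Equiv.Perm (Fin (m+1)), (m + k - numDescents (m+1) σ).choose (m+1) := by
        rw [Finset.mul_sum]
        refine Finset.sum_congr rfl (fun σ _ => ?_)
        rw [Finset.sum_const]
        simp [mul_comm]
    _ = (m + 2) * k ^ (m+1) := by rw [worpitzky m k hk]

/-- the cut-then-k-riffle-shuffle measure is a probability measure. -/
theorem cutRiffle_sum_eq_one (n k : ℕ) (hn : 2 ≤ n) (hk : 1 ≤ k) :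
    ∑ π : Equiv.Perm (Fin n), cutRiffle k n π = 1 := by
  obtain ⟨m, rfl⟩ : ∃ m, n = m + 2 := ⟨n - 2, by omega⟩
  have h1 : m + 2 - 1 = m + 1 := by omega
  unfold cutRiffle
  rw [h1, ← Finset.sum_div]
  have hkey := key_sum m k hk
  have hcast : (∑ π : Equiv.Perm (Fin (m+2)),
      ((Nat.choose ((m+2) + k - numCyclicDescents (m+2) π - 1) (m+1) : ℝ)))
      = ((m+2 : ℕ) : ℝ) * (k : ℝ) ^ (m+1) := by
    rw [← Nat.cast_sum, hkey]
    push_cast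
    ring
  rw [hcast, div_self]
  have hk' : (0:ℝ) < (k : ℝ) := by exact_mod_cast hk
  positivity
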